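/- The regular iterates satisfy h^{[1]} = h and h^{[s+t]} = h^{[s]} ∘ h^{[t]} for all s, t. -/

import Mathlib

open PowerSeries

/-- Composition `g ∘ f` of formal power series (intended for `f` with zero constant term):
the `n`-th coefficient is `∑_{k ≤ n} g_k · (f^k)_n`. -/
noncomputable def PowerSeries.comp' {K : Type*} [CommRing K]
    (g f : PowerSeries K) : PowerSeries K :=
  PowerSeries.mk fun n => ∑ k ∈ Finset.range (n + 1), (coeff k g) * coeff n (f ^ k)

section Helpers

open Finset

variable {K : Type*} [CommRing K]

lemma pow_coeff_zero {c : PowerSeries K} (hc : constantCoeff c = 0)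
    {n k : ℕ} (hnk : n < k) : coeff n (c ^ k) = 0 := by
  have : (X : PowerSeries K) ^ k ∣ c ^ k :=
    pow_dvd_pow_of_dvd (PowerSeries.X_dvd_iff.mpr hc) k
  exact PowerSeries.X_pow_dvd_iff.mp this n hnk

lemma coeff_comp' (g c : PowerSeries K) (n : ℕ) :
    coeff n (g.comp' c) = ∑ k ∈ range (n+1), coeff k g * coeff n (c ^ k) := by
  simp [PowerSeries.comp']

lemma coeff_aeval {c : PowerSeries K} (hc : constantCoeff c = 0)
    (P : Polynomial K) (n : ℕ) :
    coeff n (Polynomial.aeval c P) = ∑ i ∈ range (n+1), P.coeff i * coeff n (c ^ i) := by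
  rw [Polynomial.aeval_def, Polynomial.eval₂_eq_sum, Polynomial.sum_def, map_sum]
  have step1 : ∑ e ∈ P.support, coeff n (algebraMap K (PowerSeries K) (P.coeff e) * c ^ e)
      = ∑ e ∈ P.support ∪ range (n+1), P.coeff e * coeff n (c ^ e) := by
    rw [Finset.sum_subset Finset.subset_union_left]
    · exact Finset.sum_congr rfl fun e _ => by
        simp [PowerSeries.algebraMap_apply, PowerSeries.coeff_C_mul]
    · intro e _ he
      simp [Polynomial.notMem_support_iff.mp he]
  rw [step1, ← Finset.sum_subset Finset.subset_union_right]
  intro e _ he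
  rw [pow_coeff_zero hc (by simpa using he), mul_zero]

lemma coeff_comp'_eq_aeval {c : PowerSeries K} (hc : constantCoeff c = 0)
    (g : PowerSeries K) {n N : ℕ} (hnN : n < N) :
    coeff n (g.comp' c) = coeff n (Polynomial.aeval c (trunc N g)) := by
  rw [coeff_comp', coeff_aeval hc]
  refine Finset.sum_congr rfl fun i hi => ?_
  rw [PowerSeries.coeff_trunc, if_pos (lt_of_lt_of_le (Finset.mem_range.mp hi) hnN)]

lemma comp'_mul {c : PowerSeries K} (hc : constantCoeff c = 0)
    (a b : PowerSeries K) : (a * b).comp' c = a.comp' c * b.comp' c := by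
  ext n
  rw [coeff_comp'_eq_aeval hc _ (Nat.lt_succ_self n)]
  have key : coeff n (Polynomial.aeval c (trunc (n+1) (a*b)))
      = coeff n (Polynomial.aeval c (trunc (n+1) a * trunc (n+1) b)) := by
    rw [coeff_aeval hc, coeff_aeval hc]
    refine Finset.sum_congr rfl fun i hi => ?_
    congr 1
    have hin : i < n + 1 := Finset.mem_range.mp hi
    rw [PowerSeries.coeff_trunc, if_pos hin, PowerSeries.coeff_mul, Polynomial.coeff_mul]
    refine Finset.sum_congr rfl fun p hp => ?_
    have h1 : p.1 < n + 1 := lt_of_le_of_lt (Finset.HasAntidiagonal.antidiagonal.fst_le hp) hin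
    have h2 : p.2 < n + 1 := lt_of_le_of_lt (Finset.HasAntidiagonal.antidiagonal.snd_le hp) hin
    rw [PowerSeries.coeff_trunc, if_pos h1, PowerSeries.coeff_trunc, if_pos h2]
  rw [key, map_mul, PowerSeries.coeff_mul, PowerSeries.coeff_mul]
  refine Finset.sum_congr rfl fun p hp => ?_
  have h1 : p.1 < n + 1 := Nat.lt_succ_of_le (Finset.HasAntidiagonal.antidiagonal.fst_le hp)
  have h2 : p.2 < n + 1 := Nat.lt_succ_of_le (Finset.HasAntidiagonal.antidiagonal.snd_le hp)
  rw [← coeff_comp'_eq_aeval hc a h1, ← coeff_comp'_eq_aeval hc b h2]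

lemma comp'_one (c : PowerSeries K) : (1 : PowerSeries K).comp' c = 1 := by
  ext n
  rw [coeff_comp']
  rw [Finset.sum_eq_single 0 (fun k _ hk => by rw [PowerSeries.coeff_one, if_neg hk, zero_mul])
    (fun h => absurd (Finset.mem_range.mpr (Nat.succ_pos n)) h)]
  simp [PowerSeries.coeff_one]

lemma comp'_pow {c : PowerSeries K} (hc : constantCoeff c = 0)
    (b : PowerSeries K) (j : ℕ) : (b ^ j).comp' c = b.comp' c ^ j := by
  induction j with
  | zero => simpa using comp'_one c
  | succ j ih => rw [pow_succ, comp'_mul hc, ih, pow_succ]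

lemma constantCoeff_comp' {b c : PowerSeries K} (hb : constantCoeff b = 0) :
    constantCoeff (b.comp' c) = 0 := by
  rw [← coeff_zero_eq_constantCoeff_apply, coeff_comp', Finset.sum_range_one, pow_zero,
    coeff_zero_eq_constantCoeff_apply, hb, zero_mul]

lemma comp'_assoc {b c : PowerSeries K} (hb : constantCoeff b = 0)
    (hc : constantCoeff c = 0) (a : PowerSeries K) :
    (a.comp' b).comp' c = a.comp' (b.comp' c) := by
  ext n
  rw [coeff_comp', coeff_comp']
  have rhs : ∑ j ∈ range (n+1), coeff j a * coeff n ((b.comp' c) ^ j)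
      = ∑ j ∈ range (n+1), coeff j a * ∑ k ∈ range (n+1), coeff k (b^j) * coeff n (c^k) := by
    refine Finset.sum_congr rfl fun j _ => by rw [← comp'_pow hc, coeff_comp']
  rw [rhs]
  have lhs : ∑ k ∈ range (n+1), coeff k (a.comp' b) * coeff n (c^k)
      = ∑ k ∈ range (n+1), (∑ j ∈ range (n+1), coeff j a * coeff k (b^j)) * coeff n (c^k) := by
    refine Finset.sum_congr rfl fun k hk => ?_
    congr 1
    rw [coeff_comp']
    apply Finset.sum_subset
    · exact Finset.range_subset_range.mpr (Nat.succ_le_succ (Nat.lt_succ_iff.mp (Finset.mem_range.mp hk)))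
    · intro j _ hj
      rw [pow_coeff_zero hb (Nat.lt_of_succ_le (le_of_not_gt (fun hlt => hj (Finset.mem_range.mpr hlt)))), mul_zero]
  rw [lhs]
  simp_rw [Finset.sum_mul, Finset.mul_sum, mul_assoc]
  exact Finset.sum_comm

lemma coeff_self_pow {G : PowerSeries K} (hG0 : coeff 0 G = 0)
    (hG1 : coeff 1 G = 1) (k : ℕ) : coeff k (G ^ k) = 1 := by
  have hG0' : constantCoeff G = 0 := by
    rw [← coeff_zero_eq_constantCoeff_apply]; exact hG0
  obtain ⟨u, hu⟩ := PowerSeries.X_dvd_iff.mpr hG0'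
  have hu0 : constantCoeff u = 1 := by
    have h := hG1
    rw [hu] at h
    rw [← coeff_zero_eq_constantCoeff_apply]
    simpa [PowerSeries.coeff_succ_X_mul] using h
  rw [hu, mul_pow]
  have h2 := PowerSeries.coeff_X_pow_mul (u ^ k) k 0
  rw [zero_add] at h2
  rw [h2, coeff_zero_eq_constantCoeff_apply, map_pow, hu0, one_pow]

end Helpers

/-- `F` is the regular `t`-th iterate of `h` (where `h z = z + ∑_{n ≥ m} hₙ zⁿ`, `h_m ≠ 0`):
`F z = z + ∑_{n ≥ m} Fₙ zⁿ` with `F_m = t · h_m` and `F ∘ h = h ∘ F`. -/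
def IsRegularIterate {K : Type*} [Field K] (m : ℕ) (h : PowerSeries K)
    (t : K) (F : PowerSeries K) : Prop :=
  coeff 0 F = 0 ∧ coeff 1 F = 1 ∧
  (∀ n, 1 < n → n < m → coeff n F = 0) ∧
  coeff m F = t * coeff m h ∧
  PowerSeries.comp' F h = PowerSeries.comp' h F

/-- The regular iterates satisfy `h^[1] = h` and `h^[s+t] = h^[s] ∘ h^[t]`:
`h` itself is the regular 1-st iterate, and the composition of the regular `s`-th and
`t`-th iterates is the regular `(s+t)`-th iterate. -/
theorem regular_iterate_one_and_add {K : Type*} [Field K] [CharZero K]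
    (m : ℕ) (hm : 2 ≤ m) (h : PowerSeries K)
    (h0 : coeff 0 h = 0) (h1 : coeff 1 h = 1)
    (hmid : ∀ n, 1 < n → n < m → coeff n h = 0)
    (hmne : coeff m h ≠ 0) :
    IsRegularIterate m h 1 h ∧
    ∀ (s t : K) (F G : PowerSeries K),
      IsRegularIterate m h s F → IsRegularIterate m h t G →
      IsRegularIterate m h (s + t) (PowerSeries.comp' F G) := by
  constructor
  · exact ⟨h0, h1, hmid, (one_mul _).symm, rfl⟩
  rintro s t F G ⟨F0, F1, Fmid, Fm, Fcomm⟩ ⟨G0, G1, Gmid, Gm, Gcomm⟩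
  have hhc : constantCoeff h = 0 := by rw [← coeff_zero_eq_constantCoeff_apply]; exact h0
  have hFc : constantCoeff F = 0 := by rw [← coeff_zero_eq_constantCoeff_apply]; exact F0
  have hGc : constantCoeff G = 0 := by rw [← coeff_zero_eq_constantCoeff_apply]; exact G0
  refine ⟨?_, ?_, ?_, ?_, ?_⟩
  · rw [coeff_comp', Finset.sum_range_one, pow_zero]
    simp [F0]
  · rw [coeff_comp', Finset.sum_range_succ, Finset.sum_range_one, pow_zero, pow_one]
    simp [F0, F1, G1, PowerSeries.coeff_one]
  · intro n hn1 hnm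
    rw [coeff_comp']
    refine Finset.sum_eq_zero fun k hk => ?_
    match k with
    | 0 => rw [F0, zero_mul]
    | 1 => rw [pow_one, Gmid n hn1 hnm, mul_zero]
    | (j+2) =>
      rw [Fmid (j+2) (by omega) (by have := Finset.mem_range.mp hk; omega), zero_mul]
  · rw [coeff_comp', Finset.sum_range_succ]
    have hsum : ∑ k ∈ Finset.range m, coeff k F * coeff m (G ^ k)
        = coeff m G := by
      rw [Finset.sum_eq_single 1 (fun k hk hk1 => ?_) (fun hmem => absurd (Finset.mem_range.mpr (by omega)) hmem)]
      · rw [F1, pow_one, one_mul]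
      · match k with
        | 0 => rw [F0, zero_mul]
        | 1 => exact absurd rfl hk1
        | (j+2) => rw [Fmid (j+2) (by omega) (by have := Finset.mem_range.mp hk; omega), zero_mul]
    rw [hsum, Fm, Gm, coeff_self_pow G0 G1 m, mul_one]
    ring
  · calc (F.comp' G).comp' h = F.comp' (G.comp' h) := comp'_assoc hGc hhc F
      _ = F.comp' (h.comp' G) := by rw [Gcomm]
      _ = (F.comp' h).comp' G := (comp'_assoc hhc hGc F).symm
      _ = (h.comp' F).comp' G := by rw [Fcomm]
      _ = h.comp' (F.comp' G) := comp'_assoc hFc hGc h
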